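/- arXiv:1404.4612 — 3 statements merged into one kernel-verified Lean document; each statement's English description precedes it below -/
import Mathlib

section
/- Suppose ⟨a(x)p, p⟩ ≤ Λ‖p‖² for all x, p ∈ ℝᵈ. Let φ : [0,T] → ℝᵈ be absolutely continuous with φ(0) = x₀ and ∫₀ᵀ L(φ(t), φ'(t)) dt ≤ α. Then sup_{t∈[0,T]} ‖φ(t)‖ ≤ (‖x₀‖ + √(2ΛαT)) · e^{‖M‖T}, where ‖M‖ is the operator norm of M. -/
open RealInnerProductSpace MeasureTheory

/-- Multiplication of a vector in `EuclideanSpace ℝ (Fin d)` by a `d × d` real matrix. -/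
noncomputable def matVec {d : ℕ} (A : Matrix (Fin d) (Fin d) ℝ)
    (x : EuclideanSpace ℝ (Fin d)) : EuclideanSpace ℝ (Fin d) := WithLp.toLp 2 (A.mulVec x)

/-- The running cost `L(x,v) = ½⟨a(x)⁻¹(v − Mx), v − Mx⟩` of the exit-time control problem,
where `M` is the closed-loop drift matrix, viewed as a (continuous) linear operator on `ℝᵈ`,
so that `‖M‖` is its operator norm. -/
noncomputable def runCost {d : ℕ}
    (a : EuclideanSpace ℝ (Fin d) → Matrix (Fin d) (Fin d) ℝ)
    (M : EuclideanSpace ℝ (Fin d) →L[ℝ] EuclideanSpace ℝ (Fin d))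
    (x v : EuclideanSpace ℝ (Fin d)) : ℝ :=
  (1 / 2) * ⟪matVec (a x)⁻¹ (v - M x), v - M x⟫

/-- `a` is uniformly elliptic with constants `lam ≤ Lam`:
`lam‖p‖² ≤ ⟨a(x)p, p⟩ ≤ Lam‖p‖²` for all `x, p ∈ ℝᵈ`. -/
def UniformlyElliptic {d : ℕ}
    (a : EuclideanSpace ℝ (Fin d) → Matrix (Fin d) (Fin d) ℝ) (lam Lam : ℝ) : Prop :=
  ∀ x p : EuclideanSpace ℝ (Fin d),
    lam * ‖p‖ ^ 2 ≤ ⟪matVec (a x) p, p⟫ ∧ ⟪matVec (a x) p, p⟫ ≤ Lam * ‖p‖ ^ 2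

/-- `φ` is absolutely continuous on `[0,T]` with (a.e.) derivative `g`: `g` is integrable on
`[0,T]` and `φ(t) = φ(0) + ∫₀ᵗ g(s) ds` for all `t ∈ [0,T]`. -/
def IsAC {d : ℕ} (T : ℝ) (φ g : ℝ → EuclideanSpace ℝ (Fin d)) : Prop :=
  IntegrableOn g (Set.Icc 0 T) ∧
    ∀ t ∈ Set.Icc (0 : ℝ) T, φ t = φ 0 + ∫ s in (0 : ℝ)..t, g s

/-- The action `S_T(φ) = ∫₀ᵀ L(φ(t), φ'(t)) dt` of an absolutely continuous path `φ` with
derivative `g`. -/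
noncomputable def action {d : ℕ}
    (a : EuclideanSpace ℝ (Fin d) → Matrix (Fin d) (Fin d) ℝ)
    (M : EuclideanSpace ℝ (Fin d) →L[ℝ] EuclideanSpace ℝ (Fin d))
    (T : ℝ) (φ g : ℝ → EuclideanSpace ℝ (Fin d)) : ℝ :=
  ∫ t in (0 : ℝ)..T, runCost a M (φ t) (g t)

open scoped Matrix

lemma inner_euclid_eq_dot {d : ℕ} (x y : EuclideanSpace ℝ (Fin d)) :
    ⟪x, y⟫ = dotProduct (x : Fin d → ℝ) (y : Fin d → ℝ) := by
  simp [PiLp.inner_apply, dotProduct, RCLike.inner_apply, mul_comm]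

lemma sqrt_aux {S T X : ℝ} (hS : 0 ≤ S) (hT : 0 ≤ T)
    (h : ∀ c : ℝ, 0 < c → X ≤ c * T / 2 + S / (2 * c)) : X ≤ Real.sqrt (S * T) := by
  rcases eq_or_lt_of_le hT with hT0 | hT0
  · have hX : X ≤ 0 := by
      by_contra hX; push_neg at hX
      have hc : (0:ℝ) < (S + 1) / X := by positivity
      have h1 := h _ hc
      rw [← hT0] at h1
      have h2 : S / (2 * ((S + 1) / X)) = S * X / (2 * (S + 1)) := by
        field_simp [ne_of_gt hX]
      rw [h2] at h1
      have h3 : S * X / (2 * (S + 1)) < X := by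
        rw [div_lt_iff₀ (by positivity)]
        nlinarith
      linarith [h1, h3]
    exact hX.trans (Real.sqrt_nonneg _)
  · rcases eq_or_lt_of_le hS with hS0 | hS0
    · have hX : X ≤ 0 := by
        by_contra hX; push_neg at hX
        have h1 := h (X / T) (by positivity)
        rw [← hS0] at h1
        have : X / T * T = X := div_mul_cancel₀ _ (ne_of_gt hT0)
        rw [this] at h1
        simp at h1
        linarith
      exact hX.trans (Real.sqrt_nonneg _)
    · have hsS : 0 < Real.sqrt S := Real.sqrt_pos.2 hS0
      have hsT : 0 < Real.sqrt T := Real.sqrt_pos.2 hT0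
      have h1 := h (Real.sqrt S / Real.sqrt T) (by positivity)
      have e1 : Real.sqrt S / Real.sqrt T * T / 2 + S / (2 * (Real.sqrt S / Real.sqrt T))
          = Real.sqrt S * Real.sqrt T := by
        have h2 : Real.sqrt S ^ 2 = S := Real.sq_sqrt hS
        have h3 : Real.sqrt T ^ 2 = T := Real.sq_sqrt hT
        field_simp
        nlinarith
      rw [e1, ← Real.sqrt_mul hS] at h1
      exact h1

lemma posdef_inv_lower {d : ℕ} {A : Matrix (Fin d) (Fin d) ℝ} (hA : A.PosDef) {Lam : ℝ}
    (hup : ∀ p : EuclideanSpace ℝ (Fin d), ⟪matVec A p, p⟫ ≤ Lam * ‖p‖ ^ 2)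
    (u : EuclideanSpace ℝ (Fin d)) :
    ‖u‖ ^ 2 ≤ Lam * ⟪matVec A⁻¹ u, u⟫ := by
  by_cases hu : u = 0
  · simp [hu, matVec]
  · have hnorm : ‖u‖ ^ 2 = dotProduct (u : Fin d → ℝ) (u : Fin d → ℝ) := by
      rw [← real_inner_self_eq_norm_sq, inner_euclid_eq_dot]
    set uv : Fin d → ℝ := u.ofLp with huv
    set q : Fin d → ℝ := A⁻¹ *ᵥ uv with hq
    have hAq : A *ᵥ q = uv := by
      rw [hq, Matrix.mulVec_mulVec,
        Matrix.mul_nonsing_inv _ ((Matrix.isUnit_iff_isUnit_det _).1 hA.isUnit),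
        Matrix.one_mulVec]
    have hAT : Aᵀ = A := by
      have := hA.isHermitian
      simpa [Matrix.IsHermitian] using this
    have hsym : ∀ x y : Fin d → ℝ, x ⬝ᵥ (A *ᵥ y) = y ⬝ᵥ (A *ᵥ x) := by
      intro x y
      rw [Matrix.dotProduct_mulVec, ← Matrix.mulVec_transpose, hAT, dotProduct_comm]
    have hup' : uv ⬝ᵥ (A *ᵥ uv) ≤ Lam * (uv ⬝ᵥ uv) := by
      have := hup u
      rw [inner_euclid_eq_dot, hnorm] at this
      rw [dotProduct_comm]
      exact this
    have hQ : (0:ℝ) ≤ q ⬝ᵥ uv := by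
      have h0 := hA.posSemidef.dotProduct_mulVec_nonneg q
      rw [star_trivial, hAq] at h0
      exact h0
    have hquad : ∀ t : ℝ, 0 ≤ (uv ⬝ᵥ (A *ᵥ uv)) * (t * t) + (2 * (uv ⬝ᵥ uv)) * t + q ⬝ᵥ uv := by
      intro t
      have h0 := hA.posSemidef.dotProduct_mulVec_nonneg (q + t • uv)
      rw [star_trivial] at h0
      have hexp : (q + t • uv) ⬝ᵥ (A *ᵥ (q + t • uv))
          = (uv ⬝ᵥ (A *ᵥ uv)) * (t * t) + (2 * (uv ⬝ᵥ uv)) * t + q ⬝ᵥ uv := by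
        have e1 : q ⬝ᵥ (A *ᵥ q) = q ⬝ᵥ uv := by rw [hAq]
        have e2 : q ⬝ᵥ (A *ᵥ uv) = uv ⬝ᵥ uv := by rw [hsym q uv, hAq]
        have e3 : uv ⬝ᵥ (A *ᵥ q) = uv ⬝ᵥ uv := by rw [hAq]
        rw [Matrix.mulVec_add, Matrix.mulVec_smul, add_dotProduct,
          smul_dotProduct, dotProduct_add, dotProduct_add,
          dotProduct_smul, dotProduct_smul, e1, e2, e3,
          smul_eq_mul, smul_eq_mul, smul_eq_mul]
        ring
      rw [hexp] at h0
      exact h0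
    have hdisc : (2 * (uv ⬝ᵥ uv)) ^ 2 - 4 * (uv ⬝ᵥ (A *ᵥ uv)) * (q ⬝ᵥ uv) ≤ 0 := by
      have := discrim_le_zero (fun t => hquad t)
      simpa [discrim] using this
    have hpos : 0 < uv ⬝ᵥ uv := by
      rw [← hnorm]
      exact pow_pos (norm_pos_iff.mpr hu) 2
    have hgoal : (uv ⬝ᵥ uv) ≤ Lam * (q ⬝ᵥ uv) := by
      nlinarith [mul_le_mul_of_nonneg_right hup' hQ, hdisc, hpos]
    rw [hnorm, inner_euclid_eq_dot]
    exact hgoal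

/-- Grönwall-type a priori bound for paths of bounded action: if
`⟨a(x)p, p⟩ ≤ Λ‖p‖²` for all `x, p`, and `φ` is absolutely continuous on `[0,T]` with
`φ(0) = x₀` and action at most `α`, then
`sup_{t∈[0,T]} ‖φ(t)‖ ≤ (‖x₀‖ + √(2ΛαT))·e^{‖M‖T}`. -/
theorem sup_norm_bound_of_action_le {d : ℕ}
    (a : EuclideanSpace ℝ (Fin d) → Matrix (Fin d) (Fin d) ℝ)
    (M : EuclideanSpace ℝ (Fin d) →L[ℝ] EuclideanSpace ℝ (Fin d))
    (hapos : ∀ x, (a x).PosDef)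
    (Lam : ℝ)
    (hup : ∀ x p : EuclideanSpace ℝ (Fin d), ⟪matVec (a x) p, p⟫ ≤ Lam * ‖p‖ ^ 2)
    (T α : ℝ) (x₀ : EuclideanSpace ℝ (Fin d)) (φ g : ℝ → EuclideanSpace ℝ (Fin d))
    (hAC : IsAC T φ g) (hx₀ : φ 0 = x₀)
    (hcost : IntegrableOn (fun t => runCost a M (φ t) (g t)) (Set.Icc 0 T))
    (hact : action a M T φ g ≤ α) :
    ∀ t ∈ Set.Icc (0 : ℝ) T,
      ‖φ t‖ ≤ (‖x₀‖ + Real.sqrt (2 * Lam * α * T)) * Real.exp (‖M‖ * T) := by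
  intro t₀ ht₀
  have hT : (0:ℝ) ≤ T := le_trans ht₀.1 ht₀.2
  rcases Nat.eq_zero_or_pos d with hd | hd
  · subst hd
    have hφ0 : φ t₀ = 0 := Subsingleton.elim _ _
    rw [hφ0, norm_zero]
    positivity
  -- d ≥ 1
  have hgi : IntegrableOn g (Set.Icc 0 T) := hAC.1
  -- Lam is positive
  have hLam : 0 < Lam := by
    have hne : Nonempty (Fin d) := ⟨⟨0, hd⟩⟩
    set p : EuclideanSpace ℝ (Fin d) := EuclideanSpace.single ⟨0, hd⟩ 1 with hp
    have hpn : ‖p‖ = 1 := by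
      rw [hp, EuclideanSpace.norm_single]; norm_num
    have hp0 : p ≠ 0 := by
      intro h
      rw [h, norm_zero] at hpn
      norm_num at hpn
    have hpos : 0 < ⟪matVec (a 0) p, p⟫ := by
      rw [inner_euclid_eq_dot]
      have h0 := (hapos 0).dotProduct_mulVec_pos (x := p.ofLp) (by simpa using hp0)
      rw [star_trivial] at h0
      rw [dotProduct_comm]
      exact h0
    have hple := hup 0 p
    nlinarith [sq_nonneg ‖p‖, norm_nonneg p, hpos, hple]
  -- cost is nonneg
  have hcost_nn : ∀ s : ℝ, 0 ≤ runCost a M (φ s) (g s) := by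
    intro s
    have h0 := ((hapos (φ s)).inv).posSemidef.dotProduct_mulVec_nonneg (g s - M (φ s)).ofLp
    rw [star_trivial] at h0
    have : (0:ℝ) ≤ ⟪matVec (a (φ s))⁻¹ (g s - M (φ s)), g s - M (φ s)⟫ := by
      rw [inner_euclid_eq_dot, dotProduct_comm]
      exact h0
    unfold runCost
    linarith
  have hα : 0 ≤ α := by
    have : 0 ≤ action a M T φ g :=
      intervalIntegral.integral_nonneg hT (fun s _ => hcost_nn s)
    linarith
  -- pointwise lower bound on the cost
  set u : ℝ → ℝ := fun s => ‖g s - M (φ s)‖ with hu_def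
  have hpt : ∀ s : ℝ, u s ^ 2 ≤ 2 * Lam * runCost a M (φ s) (g s) := by
    intro s
    have := posdef_inv_lower (hapos (φ s)) (hup (φ s)) (g s - M (φ s))
    unfold runCost
    simp only [hu_def]
    linarith
  -- continuity of φ on [0,T]
  have hφcont : ContinuousOn φ (Set.Icc 0 T) := by
    have hc := intervalIntegral.continuousOn_primitive (μ := volume) (f := g) (a := 0) (b := T) hgi
    exact ((continuousOn_const (c := φ 0)).add hc).congr fun x hx => by
      rw [hAC.2 x hx, intervalIntegral.integral_of_le hx.1]; rfl
  -- integrability facts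
  have hφi : IntegrableOn φ (Set.Icc 0 T) := hφcont.integrableOn_Icc
  have hMφi : IntegrableOn (fun s => M (φ s)) (Set.Icc 0 T) :=
    (M.continuous.comp_continuousOn hφcont).integrableOn_Icc
  have hdi : IntegrableOn (fun s => g s - M (φ s)) (Set.Icc 0 T) := hgi.sub hMφi
  have hui : IntegrableOn u (Set.Icc 0 T) := hdi.norm
  have hu2i : IntegrableOn (fun s => u s ^ 2) (Set.Icc 0 T) := by
    apply Integrable.mono' (hcost.const_mul (2 * Lam))
    · have : AEStronglyMeasurable u (volume.restrict (Set.Icc 0 T)) :=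
        hui.aestronglyMeasurable
      exact this.pow 2
    · filter_upwards with s
      rw [Real.norm_eq_abs, abs_of_nonneg (sq_nonneg _)]
      exact hpt s
  have hφni : IntegrableOn (fun s => ‖φ s‖) (Set.Icc 0 T) := hφi.norm
  -- L² bound
  have hL2 : ∫ s in Set.Icc (0:ℝ) T, u s ^ 2 ≤ 2 * Lam * α := by
    have h1 : ∫ s in Set.Icc (0:ℝ) T, u s ^ 2
        ≤ ∫ s in Set.Icc (0:ℝ) T, 2 * Lam * runCost a M (φ s) (g s) := by
      apply setIntegral_mono_on hu2i (hcost.const_mul (2 * Lam)) measurableSet_Icc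
      exact fun s _ => hpt s
    have h2 : ∫ s in Set.Icc (0:ℝ) T, 2 * Lam * runCost a M (φ s) (g s)
        = 2 * Lam * action a M T φ g := by
      rw [integral_const_mul, action, intervalIntegral.integral_of_le hT,
        integral_Icc_eq_integral_Ioc]
    rw [h2] at h1
    have := mul_le_mul_of_nonneg_left hact (by linarith : (0:ℝ) ≤ 2 * Lam)
    linarith
  -- interval integrability on subintervals
  have hII : ∀ {E : Type} [NormedAddCommGroup E] (f : ℝ → E),
      IntegrableOn f (Set.Icc 0 T) → ∀ t ∈ Set.Icc (0:ℝ) T,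
      IntervalIntegrable f volume 0 t := by
    intro E _ f hf t ht
    rw [intervalIntegrable_iff_integrableOn_Icc_of_le ht.1]
    exact hf.mono_set (Set.Icc_subset_Icc le_rfl ht.2)
  -- step F
  have hF : ∀ t ∈ Set.Icc (0:ℝ) T, ∫ s in (0:ℝ)..t, u s ≤ Real.sqrt (2 * Lam * α * T) := by
    intro t ht
    have key : (∫ s in (0:ℝ)..t, u s) ≤ Real.sqrt (2 * Lam * α * T) := by
      have h2lamα : (0:ℝ) ≤ 2 * Lam * α := by positivity
      apply sqrt_aux (S := 2 * Lam * α) (T := T) (X := ∫ s in (0:ℝ)..t, u s) h2lamα hT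
      intro c hc
      have hmono : (∫ s in (0:ℝ)..t, u s) ≤ ∫ s in (0:ℝ)..t, (c / 2 + u s ^ 2 / (2 * c)) := by
        apply intervalIntegral.integral_mono_on ht.1 (hII u hui t ht)
        · exact (intervalIntegrable_const.add (((hII _ hu2i t ht)).div_const _))
        · intro s _
          have h2 : 0 < 2 * c := by linarith
          have key : 2 * c * u s ≤ c ^ 2 + u s ^ 2 := by nlinarith [sq_nonneg (u s - c)]
          calc u s = 2 * c * u s / (2 * c) := by field_simp
            _ ≤ (c ^ 2 + u s ^ 2) / (2 * c) := by
                exact div_le_div_of_nonneg_right key h2.le |>.trans_eq rfl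
            _ = c / 2 + u s ^ 2 / (2 * c) := by field_simp
      have heval : (∫ s in (0:ℝ)..t, (c / 2 + u s ^ 2 / (2 * c)))
          = c / 2 * t + (∫ s in (0:ℝ)..t, u s ^ 2) / (2 * c) := by
        rw [intervalIntegral.integral_add intervalIntegrable_const
          (((hII _ hu2i t ht)).div_const _), intervalIntegral.integral_const,
          intervalIntegral.integral_div]
        simp [smul_eq_mul, mul_comm]
      have hsub : (∫ s in (0:ℝ)..t, u s ^ 2) ≤ 2 * Lam * α := by
        rw [intervalIntegral.integral_of_le ht.1]
        have hsubset : Set.Ioc (0:ℝ) t ⊆ Set.Icc (0:ℝ) T :=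
          (Set.Ioc_subset_Icc_self).trans (Set.Icc_subset_Icc le_rfl ht.2)
        have hmono2 : (∫ s in Set.Ioc (0:ℝ) t, u s ^ 2)
            ≤ ∫ s in Set.Icc (0:ℝ) T, u s ^ 2 := by
          apply setIntegral_mono_set hu2i
          · filter_upwards with s using sq_nonneg _
          · exact HasSubset.Subset.eventuallyLE hsubset
        linarith [hL2]
      have hct : c / 2 * t ≤ c * T / 2 := by nlinarith [ht.2]
      have h2c : (0:ℝ) < 2 * c := by linarith
      have hfinal : (∫ s in (0:ℝ)..t, u s ^ 2) / (2 * c) ≤ 2 * Lam * α / (2 * c) :=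
        div_le_div_of_nonneg_right hsub h2c.le
      calc (∫ s in (0:ℝ)..t, u s) ≤ c / 2 * t + (∫ s in (0:ℝ)..t, u s ^ 2) / (2 * c) := by
            rw [← heval]; exact hmono
        _ ≤ c * T / 2 + 2 * Lam * α / (2 * c) := by linarith
    exact key
  -- key integral inequality
  set C : ℝ := ‖x₀‖ + Real.sqrt (2 * Lam * α * T) with hC_def
  have hC : 0 ≤ C := by positivity
  set K : ℝ := ‖M‖ with hK_def
  have hK : 0 ≤ K := norm_nonneg _
  have hkey : ∀ t ∈ Set.Icc (0:ℝ) T, ‖φ t‖ ≤ C + K * ∫ s in (0:ℝ)..t, ‖φ s‖ := by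
    intro t ht
    rw [hAC.2 t ht, hx₀]
    have hsplit : (∫ s in (0:ℝ)..t, g s)
        = (∫ s in (0:ℝ)..t, (g s - M (φ s))) + ∫ s in (0:ℝ)..t, M (φ s) := by
      rw [← intervalIntegral.integral_add (hII _ hdi t ht) (hII _ hMφi t ht)]
      simp
    have h1 : ‖∫ s in (0:ℝ)..t, (g s - M (φ s))‖ ≤ Real.sqrt (2 * Lam * α * T) := by
      refine le_trans (intervalIntegral.norm_integral_le_integral_norm ht.1) ?_
      exact hF t ht
    have h2 : ‖∫ s in (0:ℝ)..t, M (φ s)‖ ≤ K * ∫ s in (0:ℝ)..t, ‖φ s‖ := by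
      refine le_trans (intervalIntegral.norm_integral_le_integral_norm ht.1) ?_
      rw [← intervalIntegral.integral_const_mul]
      apply intervalIntegral.integral_mono_on ht.1 ((hII _ hMφi t ht).norm)
      · exact (hII _ hφni t ht).const_mul K
      · exact fun s _ => M.le_opNorm (φ s)
    calc ‖x₀ + ∫ s in (0:ℝ)..t, g s‖ ≤ ‖x₀‖ + ‖∫ s in (0:ℝ)..t, g s‖ := norm_add_le _ _
      _ ≤ ‖x₀‖ + (‖∫ s in (0:ℝ)..t, (g s - M (φ s))‖ + ‖∫ s in (0:ℝ)..t, M (φ s)‖) := by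
          rw [hsplit]; exact add_le_add_right (norm_add_le _ _) _
      _ ≤ ‖x₀‖ + (Real.sqrt (2 * Lam * α * T) + K * ∫ s in (0:ℝ)..t, ‖φ s‖) := by
          exact add_le_add_right (add_le_add h1 h2) _
      _ = C + K * ∫ s in (0:ℝ)..t, ‖φ s‖ := by rw [hC_def]; ring
  -- continuous extension of ‖φ‖
  set π : ℝ → ℝ := fun s => max 0 (min s T) with hπ_def
  have hπcont : Continuous π := continuous_const.max (continuous_id.min continuous_const)
  have hπmem : ∀ s, π s ∈ Set.Icc (0:ℝ) T := by
    intro s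
    constructor
    · exact le_max_left _ _
    · exact max_le hT (min_le_right _ _)
  have hπid : ∀ s ∈ Set.Icc (0:ℝ) T, π s = s := by
    intro s hs
    rw [hπ_def]
    simp [min_eq_left hs.2, max_eq_right hs.1]
  set h : ℝ → ℝ := fun s => ‖φ (π s)‖ with hh_def
  have hhcont : Continuous h :=
    (continuous_norm.comp_continuousOn hφcont).comp_continuous hπcont hπmem
  have hhnn : ∀ s, 0 ≤ h s := fun s => norm_nonneg _
  have hheq : ∀ s ∈ Set.Icc (0:ℝ) T, h s = ‖φ s‖ := by
    intro s hs; rw [hh_def]; simp only []; rw [hπid s hs]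
  set v : ℝ → ℝ := fun r => C + K * ∫ s in (0:ℝ)..r, h s with hv_def
  have hv_eq : ∀ t ∈ Set.Icc (0:ℝ) T, v t = C + K * ∫ s in (0:ℝ)..t, ‖φ s‖ := by
    intro t ht
    rw [hv_def]
    simp only []
    congr 1
    congr 1
    apply intervalIntegral.integral_congr
    intro s hs
    rw [Set.uIcc_of_le ht.1] at hs
    exact hheq s ⟨hs.1, le_trans hs.2 ht.2⟩
  have hvd : ∀ r : ℝ, HasDerivAt v (K * h r) r := by
    intro r
    exact ((hhcont.integral_hasStrictDerivAt 0 r).hasDerivAt.const_mul K).const_add C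
  have hv0 : v 0 = C := by rw [hv_def]; simp
  have hφ_le_v : ∀ t ∈ Set.Icc (0:ℝ) T, ‖φ t‖ ≤ v t := by
    intro t ht
    rw [hv_eq t ht]
    exact hkey t ht
  have hv_nn : ∀ t ∈ Set.Icc (0:ℝ) T, 0 ≤ v t := by
    intro t ht
    exact le_trans (norm_nonneg _) (hφ_le_v t ht)
  have hgron := norm_le_gronwallBound_of_norm_deriv_right_le (f := v)
    (f' := fun r => K * h r) (δ := C) (K := K) (ε := 0) (a := 0) (b := T)
    (fun r _ => (hvd r).continuousAt.continuousWithinAt)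
    (fun r _ => (hvd r).hasDerivWithinAt)
    (by rw [hv0, Real.norm_eq_abs, abs_of_nonneg hC])
    ?_
  · have hb := hgron t₀ ht₀
    rw [gronwallBound_ε0, sub_zero] at hb
    have h1 : ‖φ t₀‖ ≤ ‖v t₀‖ := le_trans (hφ_le_v t₀ ht₀) (le_abs_self _)
    have h2 : C * Real.exp (K * t₀) ≤ C * Real.exp (K * T) := by
      apply mul_le_mul_of_nonneg_left _ hC
      exact Real.exp_le_exp.2 (mul_le_mul_of_nonneg_left ht₀.2 hK)
    calc ‖φ t₀‖ ≤ ‖v t₀‖ := h1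
      _ ≤ C * Real.exp (K * t₀) := hb
      _ ≤ C * Real.exp (K * T) := h2
  · intro r hr
    have hrIcc : r ∈ Set.Icc (0:ℝ) T := ⟨hr.1, hr.2.le⟩
    have e1 : ‖K * h r‖ = K * h r := by
      rw [Real.norm_eq_abs, abs_of_nonneg (mul_nonneg hK (hhnn r))]
    have e2 : h r ≤ v r := by
      rw [hheq r hrIcc]
      exact hφ_le_v r hrIcc
    have e3 : v r ≤ ‖v r‖ := le_abs_self _
    rw [e1, add_zero]
    exact mul_le_mul_of_nonneg_left (e2.trans e3) hK
end

section
/- Suppose ⟨a(x)p, p⟩ ≥ λ‖p‖² for all x, p ∈ ℝᵈ, with λ > 0. Then for all x, y ∈ ℝᵈ, the quasipotential satisfies I(x,y) ≤ (1/(2λ)) · ‖y − x‖ · (1 + ‖M‖·max(‖x‖, ‖y‖))², where ‖M‖ is the operator norm of M. -/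
open RealInnerProductSpace MeasureTheory

/-- The quasipotential `I(x,y)`: the infimum of the action `S_T(φ)` over all `T ≥ 0` and all
absolutely continuous paths `φ : [0,T] → ℝᵈ` (with integrable running cost, i.e. finite
action) with `φ(0) = x` and `φ(T) = y`. -/
noncomputable def quasipotential {d : ℕ}
    (a : EuclideanSpace ℝ (Fin d) → Matrix (Fin d) (Fin d) ℝ)
    (M : EuclideanSpace ℝ (Fin d) →L[ℝ] EuclideanSpace ℝ (Fin d))
    (x y : EuclideanSpace ℝ (Fin d)) : ℝ :=
  sInf {r : ℝ | ∃ T : ℝ, 0 ≤ T ∧ ∃ φ g : ℝ → EuclideanSpace ℝ (Fin d),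
    IsAC T φ g ∧ IntegrableOn (fun t => runCost a M (φ t) (g t)) (Set.Icc 0 T) ∧
    φ 0 = x ∧ φ T = y ∧ r = action a M T φ g}

lemma inv_quad {d : ℕ} (A : Matrix (Fin d) (Fin d) ℝ) (hA : A.PosDef) {lam : ℝ} (hlam : 0 < lam)
    (h : ∀ p : EuclideanSpace ℝ (Fin d), lam * ‖p‖ ^ 2 ≤ ⟪matVec A p, p⟫)
    (w : EuclideanSpace ℝ (Fin d)) :
    0 ≤ ⟪matVec A⁻¹ w, w⟫ ∧ ⟪matVec A⁻¹ w, w⟫ ≤ ‖w‖ ^ 2 / lam := by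
  set p : EuclideanSpace ℝ (Fin d) := matVec A⁻¹ w with hp
  have hAp : matVec A p = w := by
    show WithLp.toLp 2 (A.mulVec (A⁻¹.mulVec w.ofLp)) = WithLp.toLp 2 w.ofLp
    rw [Matrix.mulVec_mulVec, Matrix.mul_nonsing_inv _ (isUnit_iff_ne_zero.2 hA.det_pos.ne'),
      Matrix.one_mulVec]
  have h1 : lam * ‖p‖ ^ 2 ≤ ⟪p, w⟫ := by
    have h' := h p
    rw [real_inner_comm] at h'
    rwa [hAp] at h'
  have h2 : ⟪p, w⟫ ≤ ‖p‖ * ‖w‖ := real_inner_le_norm p w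
  constructor
  · exact le_trans (by positivity) h1
  · rw [le_div_iff₀ hlam]
    nlinarith [norm_nonneg p, norm_nonneg w, sq_nonneg (lam * ‖p‖ - ‖w‖), sq_nonneg ‖p‖]

lemma runCost_continuous_aux {d : ℕ}
    (a : EuclideanSpace ℝ (Fin d) → Matrix (Fin d) (Fin d) ℝ)
    (M : EuclideanSpace ℝ (Fin d) →L[ℝ] EuclideanSpace ℝ (Fin d))
    (hapos : ∀ x, (a x).PosDef) (hacont : Continuous a)
    (u : EuclideanSpace ℝ (Fin d)) :
    Continuous fun z => (1 / 2 : ℝ) * ⟪matVec (a z)⁻¹ (u - M z), u - M z⟫ := by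
  have hinv : Continuous fun z => (a z)⁻¹ := by
    simp only [Matrix.inv_def, Ring.inverse_eq_inv']
    exact (hacont.matrix_det.inv₀ fun z => (hapos z).det_pos.ne').smul hacont.matrix_adjugate
  have hw : Continuous fun z : EuclideanSpace ℝ (Fin d) => u - M z := continuous_const.sub M.continuous
  have hmv : Continuous fun z => matVec (a z)⁻¹ (u - M z) :=
    (PiLp.continuous_toLp 2 _).comp (hinv.matrix_mulVec ((PiLp.continuous_ofLp 2 _).comp hw))
  exact continuous_const.mul (hmv.inner hw)

/-- Upper bound for the quasipotential via the unit-speed straight-line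
path: if `⟨a(x)p, p⟩ ≥ λ‖p‖²` for all `x, p`, with `λ > 0`, then
`I(x,y) ≤ (1/(2λ))·‖y − x‖·(1 + ‖M‖·max(‖x‖, ‖y‖))²`. -/
theorem quasipotential_upper_bound {d : ℕ}
    (a : EuclideanSpace ℝ (Fin d) → Matrix (Fin d) (Fin d) ℝ)
    (M : EuclideanSpace ℝ (Fin d) →L[ℝ] EuclideanSpace ℝ (Fin d))
    (hapos : ∀ x, (a x).PosDef) (hacont : Continuous a)
    (lam : ℝ) (hlam : 0 < lam)
    (hlow : ∀ x p : EuclideanSpace ℝ (Fin d), lam * ‖p‖ ^ 2 ≤ ⟪matVec (a x) p, p⟫) :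
    ∀ x y : EuclideanSpace ℝ (Fin d),
      quasipotential a M x y ≤
        (1 / (2 * lam)) * ‖y - x‖ * (1 + ‖M‖ * max ‖x‖ ‖y‖) ^ 2 := by
  have hquad : ∀ z w : EuclideanSpace ℝ (Fin d),
      0 ≤ ⟪matVec (a z)⁻¹ w, w⟫ ∧ ⟪matVec (a z)⁻¹ w, w⟫ ≤ ‖w‖ ^ 2 / lam :=
    fun z w => inv_quad (a z) (hapos z) hlam (hlow z) w
  have hrc_nonneg : ∀ z v : EuclideanSpace ℝ (Fin d), 0 ≤ runCost a M z v := by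
    intro z v
    have := (hquad z (v - M z)).1
    unfold runCost; linarith
  intro x y
  set S : Set ℝ := {r : ℝ | ∃ T : ℝ, 0 ≤ T ∧ ∃ φ g : ℝ → EuclideanSpace ℝ (Fin d),
    IsAC T φ g ∧ IntegrableOn (fun t => runCost a M (φ t) (g t)) (Set.Icc 0 T) ∧
    φ 0 = x ∧ φ T = y ∧ r = action a M T φ g} with hS
  have hbdd : BddBelow S := by
    refine ⟨0, fun r hr => ?_⟩
    obtain ⟨T, hT, φ, g, _, _, _, _, hr⟩ := hr
    rw [hr]
    exact intervalIntegral.integral_nonneg hT fun t _ => hrc_nonneg _ _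
  show sInf S ≤ _
  rcases eq_or_ne x y with rfl | hne
  · have hmem : (0 : ℝ) ∈ S := by
      refine ⟨0, le_refl 0, fun _ => x, fun _ => 0, ⟨?_, ?_⟩, ?_, rfl, rfl, ?_⟩
      · exact integrableOn_zero
      · intro t ht
        rw [Set.Icc_self, Set.mem_singleton_iff] at ht
        subst ht
        simp
      · exact integrableOn_const measure_Icc_lt_top.ne
      · rw [action, intervalIntegral.integral_same]
    have h0 : (1 / (2 * lam)) * ‖x - x‖ * (1 + ‖M‖ * max ‖x‖ ‖x‖) ^ 2 = 0 := by
      rw [sub_self, norm_zero]; ring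
    rw [h0]
    exact csInf_le hbdd hmem
  · set T : ℝ := ‖y - x‖ with hTdef
    have hT : 0 < T := by
      rw [hTdef, norm_pos_iff, sub_ne_zero]
      exact Ne.symm hne
    set u : EuclideanSpace ℝ (Fin d) := T⁻¹ • (y - x) with hu
    set φ : ℝ → EuclideanSpace ℝ (Fin d) := fun t => x + t • u with hφ
    set g : ℝ → EuclideanSpace ℝ (Fin d) := fun _ => u with hg
    set C : ℝ := 1 + ‖M‖ * max ‖x‖ ‖y‖ with hC
    have hC0 : 0 ≤ C := by
      have : 0 ≤ ‖M‖ * max ‖x‖ ‖y‖ := by positivity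
      linarith
    have hunorm : ‖u‖ = 1 := by
      rw [hu, norm_smul, norm_inv, Real.norm_eq_abs, abs_of_pos hT, ← hTdef,
        inv_mul_cancel₀ hT.ne']
    -- continuity
    have hFcont : Continuous fun z => runCost a M z u :=
      runCost_continuous_aux a M hapos hacont u
    have hφcont : Continuous φ := continuous_const.add (continuous_id.smul continuous_const)
    have hicont : Continuous fun t => runCost a M (φ t) (g t) :=
      hFcont.comp hφcont
    have hInt : IntegrableOn (fun t => runCost a M (φ t) (g t)) (Set.Icc 0 T) :=
      hicont.integrableOn_Icc
    -- membership
    have hφT : φ T = y := by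
      rw [hφ]
      show x + T • (T⁻¹ • (y - x)) = y
      rw [smul_smul, mul_inv_cancel₀ hT.ne', one_smul]
      abel
    have hmem : action a M T φ g ∈ S := by
      refine ⟨T, hT.le, φ, g, ⟨?_, ?_⟩, hInt, by simp [hφ], hφT, rfl⟩
      · exact integrableOn_const measure_Icc_lt_top.ne
      · intro t ht
        show x + t • u = (x + (0 : ℝ) • u) + ∫ s in (0 : ℝ)..t, u
        rw [intervalIntegral.integral_const, zero_smul, add_zero, sub_zero]
    -- norm bound along the path
    have hφnorm : ∀ t ∈ Set.Icc (0 : ℝ) T, ‖φ t‖ ≤ max ‖x‖ ‖y‖ := by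
      intro t ht
      obtain ⟨ht0, htT⟩ := ht
      have hs0 : 0 ≤ t / T := div_nonneg ht0 hT.le
      have hs1 : t / T ≤ 1 := (div_le_one hT).2 htT
      have hrepr : φ t = (1 - t / T) • x + (t / T) • y := by
        rw [hφ, hu]
        show x + t • (T⁻¹ • (y - x)) = _
        rw [smul_smul, div_eq_mul_inv]
        module
      rw [hrepr]
      calc ‖(1 - t / T) • x + (t / T) • y‖
          ≤ ‖(1 - t / T) • x‖ + ‖(t / T) • y‖ := norm_add_le _ _
        _ = (1 - t / T) * ‖x‖ + (t / T) * ‖y‖ := by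
            rw [norm_smul, norm_smul, Real.norm_eq_abs, Real.norm_eq_abs,
              abs_of_nonneg (by linarith), abs_of_nonneg hs0]
        _ ≤ (1 - t / T) * max ‖x‖ ‖y‖ + (t / T) * max ‖x‖ ‖y‖ := by
            gcongr <;> first
              | linarith
              | exact le_max_left _ _
              | exact le_max_right _ _
        _ = max ‖x‖ ‖y‖ := by ring
    -- pointwise cost bound
    have hcost : ∀ t ∈ Set.Icc (0 : ℝ) T, runCost a M (φ t) (g t) ≤ 1 / (2 * lam) * C ^ 2 := by
      intro t ht
      have hwnorm : ‖u - M (φ t)‖ ≤ C := by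
        calc ‖u - M (φ t)‖ ≤ ‖u‖ + ‖M (φ t)‖ := norm_sub_le _ _
          _ ≤ 1 + ‖M‖ * max ‖x‖ ‖y‖ := by
              rw [hunorm]
              gcongr
              exact (M.le_opNorm _).trans (by gcongr; exact hφnorm t ht)
      have h2 := (hquad (φ t) (u - M (φ t))).2
      have hsq : ‖u - M (φ t)‖ ^ 2 ≤ C ^ 2 := by
        have := norm_nonneg (u - M (φ t))
        nlinarith
      have hthis : ⟪matVec (a (φ t))⁻¹ (u - M (φ t)), u - M (φ t)⟫ ≤ C ^ 2 / lam :=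
        h2.trans (by gcongr)
      have hfin : (1 / 2 : ℝ) * (C ^ 2 / lam) = 1 / (2 * lam) * C ^ 2 := by
        field_simp
      show (1 / 2 : ℝ) * ⟪matVec (a (φ t))⁻¹ (u - M (φ t)), u - M (φ t)⟫ ≤ 1 / (2 * lam) * C ^ 2
      linarith [hthis, hfin]
    -- integrate the bound
    have hact : action a M T φ g ≤ 1 / (2 * lam) * T * C ^ 2 := by
      have hmono : (∫ t in (0 : ℝ)..T, runCost a M (φ t) (g t)) ≤
          ∫ _t in (0 : ℝ)..T, (1 / (2 * lam) * C ^ 2) :=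
        intervalIntegral.integral_mono_on hT.le (hicont.intervalIntegrable 0 T)
          intervalIntegrable_const hcost
      rw [action]
      refine hmono.trans ?_
      rw [intervalIntegral.integral_const, smul_eq_mul, sub_zero]
      exact le_of_eq (by ring)
    exact (csInf_le hbdd hmem).trans hact
end

section
/- Suppose ⟨a(x)p, p⟩ ≥ λ‖p‖² for all x, p ∈ ℝᵈ, with λ > 0. Then for every R > 0, every x ∈ ℝᵈ and all y₁, y₂ ∈ ℝᵈ with ‖y₁‖ ≤ R and ‖y₂‖ ≤ R, the quasipotential satisfies |I(x,y₁) − I(x,y₂)| ≤ (1/(2λ)) · ‖y₁ − y₂‖ · (1 + ‖M‖·R)², where ‖M‖ is the operator norm of M; in particular y ↦ I(x,y) is locally Lipschitz continuous. -/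
open RealInnerProductSpace MeasureTheory

lemma inner_matVec {d : ℕ} (A : Matrix (Fin d) (Fin d) ℝ) (w : EuclideanSpace ℝ (Fin d)) :
    ⟪matVec A w, w⟫ = dotProduct (star (w : Fin d → ℝ)) (A.mulVec w) := by
  simp [matVec, PiLp.inner_apply, dotProduct, mul_comm]

lemma inner_matVec_nonneg {d : ℕ} {A : Matrix (Fin d) (Fin d) ℝ} (hA : A.PosDef)
    (w : EuclideanSpace ℝ (Fin d)) : 0 ≤ ⟪matVec A w, w⟫ := by
  rw [inner_matVec]; exact hA.posSemidef.dotProduct_mulVec_nonneg _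

lemma inner_inv_le {d : ℕ} {A : Matrix (Fin d) (Fin d) ℝ} (hA : A.PosDef)
    {lam : ℝ} (hlam : 0 < lam)
    (h : ∀ p : EuclideanSpace ℝ (Fin d), lam * ‖p‖ ^ 2 ≤ ⟪matVec A p, p⟫)
    (w : EuclideanSpace ℝ (Fin d)) :
    ⟪matVec A⁻¹ w, w⟫ ≤ lam⁻¹ * ‖w‖ ^ 2 := by
  set p : EuclideanSpace ℝ (Fin d) := matVec A⁻¹ w with hp
  have hAw : matVec A p = w := by
    show WithLp.toLp 2 (A.mulVec (A⁻¹.mulVec w.ofLp)) = w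
    rw [Matrix.mulVec_mulVec, Matrix.mul_nonsing_inv _ (hA.det_pos.ne'.isUnit), Matrix.one_mulVec, WithLp.toLp_ofLp]
  have h1 : lam * ‖p‖ ^ 2 ≤ ⟪matVec A p, p⟫ := h p
  have h2 : ⟪matVec A⁻¹ w, w⟫ = ⟪matVec A p, p⟫ := by
    rw [hAw, ← hp, real_inner_comm]
  have h3 : ⟪matVec A p, p⟫ ≤ ‖p‖ * ‖w‖ := by
    calc ⟪matVec A p, p⟫ = ⟪p, w⟫ := by rw [hAw, real_inner_comm]
    _ ≤ ‖p‖ * ‖w‖ := real_inner_le_norm p w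
  rw [h2]
  have key : lam * ‖p‖ ^ 2 ≤ ‖p‖ * ‖w‖ := le_trans h1 h3
  rcases eq_or_lt_of_le (norm_nonneg p) with hp0 | hp0
  · have : ⟪matVec A p, p⟫ ≤ 0 := by rw [← hp0] at h3; simpa using h3
    have : (0:ℝ) ≤ lam⁻¹ * ‖w‖ ^ 2 := by positivity
    linarith
  · have hpw : lam * ‖p‖ ≤ ‖w‖ := by
      have := mul_le_mul_of_nonneg_right key (le_of_lt (inv_pos.mpr hp0))
      calc lam * ‖p‖ = lam * ‖p‖ ^ 2 * ‖p‖⁻¹ := by field_simp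
      _ ≤ ‖p‖ * ‖w‖ * ‖p‖⁻¹ := this
      _ = ‖w‖ := by field_simp [hp0.ne']
    calc ⟪matVec A p, p⟫ ≤ ‖p‖ * ‖w‖ := h3
    _ ≤ (lam⁻¹ * ‖w‖) * ‖w‖ := by
        apply mul_le_mul_of_nonneg_right _ (norm_nonneg w)
        exact (le_inv_mul_iff₀ hlam).mpr hpw
    _ = lam⁻¹ * ‖w‖ ^ 2 := by ring

lemma runCost_nonneg {d : ℕ}
    {a : EuclideanSpace ℝ (Fin d) → Matrix (Fin d) (Fin d) ℝ}
    (M : EuclideanSpace ℝ (Fin d) →L[ℝ] EuclideanSpace ℝ (Fin d))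
    (hapos : ∀ x, (a x).PosDef) (x v : EuclideanSpace ℝ (Fin d)) :
    0 ≤ runCost a M x v :=
  mul_nonneg (by norm_num) (inner_matVec_nonneg (hapos x).inv _)

lemma runCost_le {d : ℕ}
    {a : EuclideanSpace ℝ (Fin d) → Matrix (Fin d) (Fin d) ℝ}
    (M : EuclideanSpace ℝ (Fin d) →L[ℝ] EuclideanSpace ℝ (Fin d))
    (hapos : ∀ x, (a x).PosDef) {lam : ℝ} (hlam : 0 < lam)
    (hlow : ∀ x p : EuclideanSpace ℝ (Fin d), lam * ‖p‖ ^ 2 ≤ ⟪matVec (a x) p, p⟫)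
    (x v : EuclideanSpace ℝ (Fin d)) :
    runCost a M x v ≤ (1 / (2 * lam)) * (‖v‖ + ‖M‖ * ‖x‖) ^ 2 := by
  have h1 : ⟪matVec (a x)⁻¹ (v - M x), v - M x⟫ ≤ lam⁻¹ * ‖v - M x‖ ^ 2 :=
    inner_inv_le (hapos x) hlam (hlow x) _
  have h2 : ‖v - M x‖ ≤ ‖v‖ + ‖M‖ * ‖x‖ := by
    calc ‖v - M x‖ ≤ ‖v‖ + ‖M x‖ := norm_sub_le _ _
    _ ≤ ‖v‖ + ‖M‖ * ‖x‖ := by linarith [M.le_opNorm x]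
  have h3 : ‖v - M x‖ ^ 2 ≤ (‖v‖ + ‖M‖ * ‖x‖) ^ 2 :=
    pow_le_pow_left₀ (norm_nonneg _) h2 2
  unfold runCost
  calc (1/2 : ℝ) * ⟪matVec (a x)⁻¹ (v - M x), v - M x⟫ ≤ (1/2) * (lam⁻¹ * ‖v - M x‖ ^ 2) := by
        linarith
  _ ≤ (1/2) * (lam⁻¹ * (‖v‖ + ‖M‖ * ‖x‖) ^ 2) := by
        have h4 := mul_le_mul_of_nonneg_left h3 (le_of_lt (inv_pos.mpr hlam))
        linarith
  _ = (1 / (2 * lam)) * (‖v‖ + ‖M‖ * ‖x‖) ^ 2 := by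
        rw [show (1:ℝ) / (2 * lam) = 2⁻¹ * lam⁻¹ by rw [one_div, mul_inv]]
        ring

lemma continuous_runCost_comp {d : ℕ}
    {a : EuclideanSpace ℝ (Fin d) → Matrix (Fin d) (Fin d) ℝ}
    (M : EuclideanSpace ℝ (Fin d) →L[ℝ] EuclideanSpace ℝ (Fin d))
    (hapos : ∀ x, (a x).PosDef) (hacont : Continuous a)
    {φ g : ℝ → EuclideanSpace ℝ (Fin d)} (hφ : Continuous φ) (hg : Continuous g) :
    Continuous fun t => runCost a M (φ t) (g t) := by
  have hdet : Continuous fun x => (a x).det := hacont.matrix_det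
  have hinv : Continuous fun x => (a x)⁻¹ := by
    have h1 : Continuous fun x => ((a x).det)⁻¹ :=
      hdet.inv₀ (fun x => (hapos x).det_pos.ne')
    have h2 : Continuous fun x => (a x).adjugate := hacont.matrix_adjugate
    rw [show (fun x => (a x)⁻¹) = fun x => ((a x).det)⁻¹ • (a x).adjugate from
      funext fun x => by simp only [Matrix.inv_def, Ring.inverse_eq_inv']]
    exact h1.smul h2
  have hw : Continuous fun t => g t - M (φ t) := hg.sub (M.continuous.comp hφ)
  have hB : Continuous fun t => (a (φ t))⁻¹ := hinv.comp hφ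
  have hu : Continuous fun t => matVec ((a (φ t))⁻¹) (g t - M (φ t)) := by
    show Continuous fun t => (WithLp.toLp 2 ((a (φ t))⁻¹.mulVec (g t - M (φ t))) : EuclideanSpace ℝ (Fin d))
    apply (PiLp.continuous_toLp 2 _).comp
    apply continuous_pi
    intro i
    show Continuous fun t => ∑ j, (a (φ t))⁻¹ i j * (g t - M (φ t)) j
    apply continuous_finset_sum
    intro j _
    exact (hB.matrix_elem i j).mul ((EuclideanSpace.proj j).continuous.comp hw)
  have : Continuous fun t => ⟪matVec ((a (φ t))⁻¹) (g t - M (φ t)), g t - M (φ t)⟫ :=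
    hu.inner hw
  unfold runCost
  exact continuous_const.mul this

def QSet {d : ℕ}
    (a : EuclideanSpace ℝ (Fin d) → Matrix (Fin d) (Fin d) ℝ)
    (M : EuclideanSpace ℝ (Fin d) →L[ℝ] EuclideanSpace ℝ (Fin d))
    (x y : EuclideanSpace ℝ (Fin d)) : Set ℝ :=
  {r : ℝ | ∃ T : ℝ, 0 ≤ T ∧ ∃ φ g : ℝ → EuclideanSpace ℝ (Fin d),
    IsAC T φ g ∧ IntegrableOn (fun t => runCost a M (φ t) (g t)) (Set.Icc 0 T) ∧
    φ 0 = x ∧ φ T = y ∧ r = action a M T φ g}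

lemma QSet_nonempty {d : ℕ}
    {a : EuclideanSpace ℝ (Fin d) → Matrix (Fin d) (Fin d) ℝ}
    (M : EuclideanSpace ℝ (Fin d) →L[ℝ] EuclideanSpace ℝ (Fin d))
    (hapos : ∀ x, (a x).PosDef) (hacont : Continuous a)
    (x y : EuclideanSpace ℝ (Fin d)) : (QSet a M x y).Nonempty := by
  set φ : ℝ → EuclideanSpace ℝ (Fin d) := fun t => x + t • (y - x) with hφdef
  set g : ℝ → EuclideanSpace ℝ (Fin d) := fun _ => y - x with hgdef
  have hφc : Continuous φ := by
    apply continuous_const.add (continuous_id.smul continuous_const)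
  have hgc : Continuous g := continuous_const
  refine ⟨action a M 1 φ g, 1, zero_le_one, φ, g, ⟨?_, ?_⟩, ?_, ?_, ?_, rfl⟩
  · exact integrableOn_const (by simp [Real.volume_Icc])
  · intro t _
    rw [intervalIntegral.integral_const]
    simp [hφdef]
  · exact (continuous_runCost_comp M hapos hacont hφc hgc).integrableOn_Icc
  · simp [hφdef]
  · simp [hφdef]

lemma QSet_nonneg {d : ℕ}
    {a : EuclideanSpace ℝ (Fin d) → Matrix (Fin d) (Fin d) ℝ}
    {M : EuclideanSpace ℝ (Fin d) →L[ℝ] EuclideanSpace ℝ (Fin d)}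
    (hapos : ∀ x, (a x).PosDef)
    {x y : EuclideanSpace ℝ (Fin d)} {r : ℝ} (hr : r ∈ QSet a M x y) : 0 ≤ r := by
  obtain ⟨T, hT, φ, g, _, _, _, _, hr⟩ := hr
  rw [hr]
  exact intervalIntegral.integral_nonneg hT (fun u _ => runCost_nonneg M hapos _ _)

lemma QSet_bddBelow {d : ℕ}
    {a : EuclideanSpace ℝ (Fin d) → Matrix (Fin d) (Fin d) ℝ}
    {M : EuclideanSpace ℝ (Fin d) →L[ℝ] EuclideanSpace ℝ (Fin d)}
    (hapos : ∀ x, (a x).PosDef) (x y : EuclideanSpace ℝ (Fin d)) :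
    BddBelow (QSet a M x y) :=
  ⟨0, fun _ hr => QSet_nonneg hapos hr⟩

lemma QSet_extend {d : ℕ}
    {a : EuclideanSpace ℝ (Fin d) → Matrix (Fin d) (Fin d) ℝ}
    {M : EuclideanSpace ℝ (Fin d) →L[ℝ] EuclideanSpace ℝ (Fin d)}
    (hapos : ∀ x, (a x).PosDef) (hacont : Continuous a)
    {lam : ℝ} (hlam : 0 < lam)
    (hlow : ∀ x p : EuclideanSpace ℝ (Fin d), lam * ‖p‖ ^ 2 ≤ ⟪matVec (a x) p, p⟫)
    {R : ℝ} (hR : 0 < R) (x y₁ y₂ : EuclideanSpace ℝ (Fin d))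
    (hy1 : ‖y₁‖ ≤ R) (hy2 : ‖y₂‖ ≤ R)
    {r : ℝ} (hr : r ∈ QSet a M x y₂) :
    ∃ r' ∈ QSet a M x y₁, r' ≤ r + (1 / (2 * lam)) * ‖y₁ - y₂‖ * (1 + ‖M‖ * R) ^ 2 := by
  by_cases hy : y₁ = y₂
  · refine ⟨r, by rwa [hy], ?_⟩
    have : (0:ℝ) ≤ (1 / (2 * lam)) * ‖y₁ - y₂‖ * (1 + ‖M‖ * R) ^ 2 := by positivity
    linarith
  obtain ⟨T, hT, φ, g, hAC, hint, hx0, hxT, hrdef⟩ := hr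
  set τ : ℝ := ‖y₁ - y₂‖ with hτdef
  have hτ : 0 < τ := norm_pos_iff.mpr (sub_ne_zero.mpr hy)
  set e : EuclideanSpace ℝ (Fin d) := τ⁻¹ • (y₁ - y₂) with hedef
  have he : ‖e‖ = 1 := by
    rw [hedef, norm_smul, norm_inv, Real.norm_eq_abs, abs_of_pos hτ, ← hτdef,
      inv_mul_cancel₀ hτ.ne']
  set T' : ℝ := T + τ with hT'def
  have hTT' : T < T' := lt_add_of_pos_right T hτ
  have hT'0 : 0 ≤ T' := le_trans hT (le_of_lt hTT')
  set ψ : ℝ → EuclideanSpace ℝ (Fin d) := fun t => y₂ + (t - T) • e with hψdef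
  have hψc : Continuous ψ := by
    exact continuous_const.add ((continuous_id.sub continuous_const).smul continuous_const)
  set φ' : ℝ → EuclideanSpace ℝ (Fin d) := fun t => if t ≤ T then φ t else ψ t with hφ'def
  set g' : ℝ → EuclideanSpace ℝ (Fin d) := fun t => if t ≤ T then g t else e with hg'def
  -- norm bound along the segment
  have hψR : ∀ t ∈ Set.Ioc T T', ‖ψ t‖ ≤ R := by
    intro t ht
    set θ : ℝ := (t - T) / τ with hθdef
    have hθ0 : 0 ≤ θ := div_nonneg (by linarith [ht.1]) hτ.le
    have hθ1 : θ ≤ 1 := by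
      rw [hθdef, div_le_one hτ]
      have := ht.2
      rw [hT'def] at this; linarith
    have hψt : ψ t = (1 - θ) • y₂ + θ • y₁ := by
      rw [hψdef]
      show y₂ + (t - T) • (τ⁻¹ • (y₁ - y₂)) = (1 - θ) • y₂ + θ • y₁
      rw [smul_smul, show (t - T) * τ⁻¹ = θ by rw [hθdef, div_eq_mul_inv],
        smul_sub, sub_smul, one_smul]
      abel
    rw [hψt]
    calc ‖(1 - θ) • y₂ + θ • y₁‖ ≤ ‖(1 - θ) • y₂‖ + ‖θ • y₁‖ := norm_add_le _ _
    _ = (1 - θ) * ‖y₂‖ + θ * ‖y₁‖ := by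
        rw [norm_smul, norm_smul, Real.norm_eq_abs, Real.norm_eq_abs,
          abs_of_nonneg (by linarith), abs_of_nonneg hθ0]
    _ ≤ (1 - θ) * R + θ * R := by
        apply add_le_add
        · exact mul_le_mul_of_nonneg_left hy2 (by linarith)
        · exact mul_le_mul_of_nonneg_left hy1 hθ0
    _ = R := by ring
  -- integrability of g'
  have hIccsplit : Set.Icc (0:ℝ) T ∪ Set.Ioc T T' = Set.Icc 0 T' :=
    Set.Icc_union_Ioc_eq_Icc hT (le_of_lt hTT')
  have hg'int : IntegrableOn g' (Set.Icc 0 T') := by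
    rw [← hIccsplit]
    apply IntegrableOn.union
    · exact hAC.1.congr_fun (fun t ht => by simp [hg'def, ht.2]) measurableSet_Icc
    · exact (integrableOn_const (C := e) measure_Ioc_lt_top.ne).congr_fun
        (fun t ht => by simp [hg'def, not_le.mpr ht.1]) measurableSet_Ioc
  have hg'ii : ∀ s u : ℝ, 0 ≤ s → s ≤ u → u ≤ T' → IntervalIntegrable g' volume s u := by
    intro s u hs hsu huT
    rw [intervalIntegrable_iff_integrableOn_Ioc_of_le hsu]
    exact hg'int.mono_set (fun t ht => ⟨by linarith [ht.1], le_trans ht.2 huT⟩)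
  -- AC property of φ'
  have hACφT : φ T = φ 0 + ∫ s in (0:ℝ)..T, g s := hAC.2 T ⟨hT, le_refl T⟩
  have hintT : ∫ s in (0:ℝ)..T, g' s = ∫ s in (0:ℝ)..T, g s := by
    apply intervalIntegral.integral_congr
    intro s hs
    rw [Set.uIcc_of_le hT] at hs
    simp [hg'def, hs.2]
  have hAC' : IsAC T' φ' g' := by
    refine ⟨hg'int, ?_⟩
    intro t ht
    have hφ'0 : φ' 0 = φ 0 := by simp [hφ'def, hT]
    by_cases htT : t ≤ T
    · have : ∫ s in (0:ℝ)..t, g' s = ∫ s in (0:ℝ)..t, g s := by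
        apply intervalIntegral.integral_congr
        intro s hs
        rw [Set.uIcc_of_le ht.1] at hs
        simp [hg'def, le_trans hs.2 htT]
      rw [this, hφ'0]
      simp only [hφ'def, htT, if_true]
      exact hAC.2 t ⟨ht.1, htT⟩
    · push_neg at htT
      have hsplit : ∫ s in (0:ℝ)..t, g' s =
          (∫ s in (0:ℝ)..T, g' s) + ∫ s in T..t, g' s :=
        (intervalIntegral.integral_add_adjacent_intervals
          (hg'ii 0 T le_rfl hT (le_of_lt hTT'))
          (hg'ii T t hT (le_of_lt htT) ht.2)).symm
      have hseg : ∫ s in T..t, g' s = (t - T) • e := by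
        rw [intervalIntegral.integral_of_le (le_of_lt htT)]
        rw [setIntegral_congr_fun measurableSet_Ioc
          (fun s hs => by simp [hg'def, not_le.mpr hs.1] : Set.EqOn g' (fun _ => e) (Set.Ioc T t))]
        simp [Real.volume_Ioc, ENNReal.toReal_ofReal (by linarith : (0:ℝ) ≤ t - T),
            max_eq_left (by linarith : (0:ℝ) ≤ t - T)]
      rw [hsplit, hseg, hintT, hφ'0]
      simp only [hφ'def, not_le.mpr htT, if_false, hψdef]
      rw [show φ 0 + ((∫ s in (0:ℝ)..T, g s) + (t - T) • e)
            = (φ 0 + ∫ s in (0:ℝ)..T, g s) + (t - T) • e by abel, ← hACφT, hxT]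
  -- integrability of the running cost along the extended path
  have hFeq1 : Set.EqOn (fun t => runCost a M (φ' t) (g' t))
      (fun t => runCost a M (φ t) (g t)) (Set.Icc 0 T) := by
    intro t ht; simp [hφ'def, hg'def, ht.2]
  have hFeq2 : Set.EqOn (fun t => runCost a M (φ' t) (g' t))
      (fun t => runCost a M (ψ t) e) (Set.Ioc T T') := by
    intro t ht; simp [hφ'def, hg'def, not_le.mpr ht.1]
  have hGcont : Continuous fun t => runCost a M (ψ t) e :=
    continuous_runCost_comp M hapos hacont hψc continuous_const
  have hGint : IntegrableOn (fun t => runCost a M (ψ t) e) (Set.Ioc T T') :=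
    hGcont.integrableOn_Icc.mono_set Set.Ioc_subset_Icc_self
  have hF'int : IntegrableOn (fun t => runCost a M (φ' t) (g' t)) (Set.Icc 0 T') := by
    rw [← hIccsplit]
    apply IntegrableOn.union
    · exact hint.congr_fun (fun t ht => (hFeq1 ht).symm) measurableSet_Icc
    · exact hGint.congr_fun (fun t ht => (hFeq2 ht).symm) measurableSet_Ioc
  have hF'ii : ∀ s u : ℝ, 0 ≤ s → s ≤ u → u ≤ T' →
      IntervalIntegrable (fun t => runCost a M (φ' t) (g' t)) volume s u := by
    intro s u hs hsu huT
    rw [intervalIntegrable_iff_integrableOn_Ioc_of_le hsu]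
    exact hF'int.mono_set (fun t ht => ⟨by linarith [ht.1], le_trans ht.2 huT⟩)
  -- the action of the extended path
  set c0 : ℝ := (1 / (2 * lam)) * (1 + ‖M‖ * R) ^ 2 with hc0def
  have haction : action a M T' φ' g' ≤ r + τ * c0 := by
    have hsplit : action a M T' φ' g' =
        (∫ t in (0:ℝ)..T, runCost a M (φ' t) (g' t)) +
        ∫ t in T..T', runCost a M (φ' t) (g' t) :=
      (intervalIntegral.integral_add_adjacent_intervals
        (hF'ii 0 T le_rfl hT (le_of_lt hTT'))
        (hF'ii T T' hT (le_of_lt hTT') le_rfl)).symm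
    have h1 : ∫ t in (0:ℝ)..T, runCost a M (φ' t) (g' t) = r := by
      rw [hrdef]
      apply intervalIntegral.integral_congr
      intro s hs
      rw [Set.uIcc_of_le hT] at hs
      exact hFeq1 hs
    have h2 : ∫ t in T..T', runCost a M (φ' t) (g' t) ≤ τ * c0 := by
      rw [intervalIntegral.integral_of_le (le_of_lt hTT'),
        setIntegral_congr_fun measurableSet_Ioc hFeq2]
      calc ∫ t in Set.Ioc T T', runCost a M (ψ t) e
          ≤ ∫ _ in Set.Ioc T T', c0 := by
            apply setIntegral_mono_on hGint
              (integrableOn_const measure_Ioc_lt_top.ne) measurableSet_Ioc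
            intro t ht
            calc runCost a M (ψ t) e ≤ (1 / (2 * lam)) * (‖e‖ + ‖M‖ * ‖ψ t‖) ^ 2 :=
                runCost_le M hapos hlam hlow _ _
            _ ≤ c0 := by
                rw [hc0def, he]
                apply mul_le_mul_of_nonneg_left _ (by positivity)
                apply pow_le_pow_left₀ (by positivity)
                have := mul_le_mul_of_nonneg_left (hψR t ht) (norm_nonneg M)
                linarith
      _ = τ * c0 := by
            rw [setIntegral_const, Real.volume_real_Ioc, smul_eq_mul]
            congr 1
            rw [max_eq_left (by linarith : (0:ℝ) ≤ T' - T)]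
            rw [hT'def]; ring
    rw [hsplit, h1]
    linarith
  refine ⟨action a M T' φ' g', ⟨T', hT'0, φ', g', hAC', hF'int, ?_, ?_, rfl⟩, ?_⟩
  · simp [hφ'def, hT, hx0]
  · simp only [hφ'def, not_le.mpr hTT', if_false, hψdef]
    rw [show T' - T = τ by rw [hT'def]; ring, hedef, smul_smul, mul_inv_cancel₀ hτ.ne',
      one_smul]
    abel
  · calc action a M T' φ' g' ≤ r + τ * c0 := haction
    _ = r + (1 / (2 * lam)) * ‖y₁ - y₂‖ * (1 + ‖M‖ * R) ^ 2 := by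
        rw [hτdef, hc0def]; ring

lemma quasipotential_eq_sInf {d : ℕ}
    (a : EuclideanSpace ℝ (Fin d) → Matrix (Fin d) (Fin d) ℝ)
    (M : EuclideanSpace ℝ (Fin d) →L[ℝ] EuclideanSpace ℝ (Fin d))
    (x y : EuclideanSpace ℝ (Fin d)) :
    quasipotential a M x y = sInf (QSet a M x y) := rfl

lemma quasipotential_one_sided {d : ℕ}
    {a : EuclideanSpace ℝ (Fin d) → Matrix (Fin d) (Fin d) ℝ}
    {M : EuclideanSpace ℝ (Fin d) →L[ℝ] EuclideanSpace ℝ (Fin d)}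
    (hapos : ∀ x, (a x).PosDef) (hacont : Continuous a)
    {lam : ℝ} (hlam : 0 < lam)
    (hlow : ∀ x p : EuclideanSpace ℝ (Fin d), lam * ‖p‖ ^ 2 ≤ ⟪matVec (a x) p, p⟫)
    {R : ℝ} (hR : 0 < R) (x y₁ y₂ : EuclideanSpace ℝ (Fin d))
    (hy1 : ‖y₁‖ ≤ R) (hy2 : ‖y₂‖ ≤ R) :
    quasipotential a M x y₁ ≤ quasipotential a M x y₂ +
      (1 / (2 * lam)) * ‖y₁ - y₂‖ * (1 + ‖M‖ * R) ^ 2 := by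
  rw [quasipotential_eq_sInf, quasipotential_eq_sInf, ← sub_le_iff_le_add]
  apply le_csInf (QSet_nonempty M hapos hacont x y₂)
  intro r hr
  obtain ⟨r', hr', hle⟩ := QSet_extend hapos hacont hlam hlow hR x y₁ y₂ hy1 hy2 hr
  have := csInf_le (QSet_bddBelow hapos x y₁) hr'
  linarith

/-- Local Lipschitz continuity of the quasipotential in its endpoint: if
`⟨a(x)p, p⟩ ≥ λ‖p‖²` for all `x, p`, with `λ > 0`, then for every `R > 0`, `x`, and
`y₁, y₂` with `‖y₁‖ ≤ R`, `‖y₂‖ ≤ R`,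
`|I(x,y₁) − I(x,y₂)| ≤ (1/(2λ))·‖y₁ − y₂‖·(1 + ‖M‖·R)²`; in particular `y ↦ I(x,y)` is
locally Lipschitz. -/
theorem quasipotential_locally_lipschitz {d : ℕ}
    (a : EuclideanSpace ℝ (Fin d) → Matrix (Fin d) (Fin d) ℝ)
    (M : EuclideanSpace ℝ (Fin d) →L[ℝ] EuclideanSpace ℝ (Fin d))
    (hapos : ∀ x, (a x).PosDef) (hacont : Continuous a)
    (lam : ℝ) (hlam : 0 < lam)
    (hlow : ∀ x p : EuclideanSpace ℝ (Fin d), lam * ‖p‖ ^ 2 ≤ ⟪matVec (a x) p, p⟫) :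
    (∀ R : ℝ, 0 < R → ∀ x y₁ y₂ : EuclideanSpace ℝ (Fin d), ‖y₁‖ ≤ R → ‖y₂‖ ≤ R →
        |quasipotential a M x y₁ - quasipotential a M x y₂| ≤
          (1 / (2 * lam)) * ‖y₁ - y₂‖ * (1 + ‖M‖ * R) ^ 2) ∧
      ∀ x : EuclideanSpace ℝ (Fin d),
        LocallyLipschitz (fun y => quasipotential a M x y) := by
  have key : ∀ R : ℝ, 0 < R → ∀ x y₁ y₂ : EuclideanSpace ℝ (Fin d), ‖y₁‖ ≤ R → ‖y₂‖ ≤ R →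
      |quasipotential a M x y₁ - quasipotential a M x y₂| ≤
        (1 / (2 * lam)) * ‖y₁ - y₂‖ * (1 + ‖M‖ * R) ^ 2 := by
    intro R hR x y₁ y₂ h1 h2
    rw [abs_sub_le_iff]
    constructor
    · linarith [quasipotential_one_sided (M := M) hapos hacont hlam hlow hR x y₁ y₂ h1 h2]
    · have := quasipotential_one_sided (M := M) hapos hacont hlam hlow hR x y₂ y₁ h2 h1
      rw [norm_sub_rev] at this
      linarith
  refine ⟨key, ?_⟩
  intro x y₀
  set R : ℝ := ‖y₀‖ + 1 with hRdef
  have hR : 0 < R := by positivity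
  refine ⟨Real.toNNReal ((1 / (2 * lam)) * (1 + ‖M‖ * R) ^ 2), Metric.ball y₀ 1,
    Metric.ball_mem_nhds y₀ one_pos, ?_⟩
  apply LipschitzOnWith.of_dist_le_mul
  intro z hz w hw
  have hzn : ‖z‖ ≤ R := by
    have := mem_ball_iff_norm.mp hz
    calc ‖z‖ = ‖(z - y₀) + y₀‖ := by rw [sub_add_cancel]
    _ ≤ ‖z - y₀‖ + ‖y₀‖ := norm_add_le _ _
    _ ≤ R := by rw [hRdef]; linarith
  have hwn : ‖w‖ ≤ R := by
    have := mem_ball_iff_norm.mp hw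
    calc ‖w‖ = ‖(w - y₀) + y₀‖ := by rw [sub_add_cancel]
    _ ≤ ‖w - y₀‖ + ‖y₀‖ := norm_add_le _ _
    _ ≤ R := by rw [hRdef]; linarith
  have hb := key R hR x z w hzn hwn
  rw [Real.dist_eq, dist_eq_norm]
  calc |quasipotential a M x z - quasipotential a M x w|
      ≤ (1 / (2 * lam)) * ‖z - w‖ * (1 + ‖M‖ * R) ^ 2 := hb
  _ = ((1 / (2 * lam)) * (1 + ‖M‖ * R) ^ 2) * ‖z - w‖ := by ring
  _ ≤ (Real.toNNReal ((1 / (2 * lam)) * (1 + ‖M‖ * R) ^ 2) : ℝ) * ‖z - w‖ := by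
      apply mul_le_mul_of_nonneg_right _ (norm_nonneg _)
      exact Real.le_coe_toNNReal _
end
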